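/- Let n ≥ 3 and let m_1 < ... < m_n be a generalized arithmetic sequence with m_i = h·m_1 + (i-1)d for i ≥ 2, h > 1, h | d, gcd(m_1, d) = 1. Write m_1 = p(n-1) + s with s ∈ {1,...,n-1} and set δ := ph + d + h. Then δ = min { b ∈ ℤ⁺ : b·m_1 ∈ ℕm_2 + ... + ℕm_n }. -/

import Mathlib

/-- δ is the least positive b with b·m₁ in the semigroup generated by m₂,…,mₙ. -/
theorem stmt_9 (n h d m1 p s : ℕ) (m : ℕ → ℕ)
    (hn : 3 ≤ n) (hh : 2 ≤ h) (hd : 1 ≤ d) (hm1 : 1 ≤ m1)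
    (hdvd : h ∣ d) (hgcd : Nat.gcd m1 d = 1)
    (hm0 : m 1 = m1)
    (hm : ∀ i, 2 ≤ i → i ≤ n → m i = h * m1 + (i - 1) * d)
    (hdiv : m1 = p * (n - 1) + s) (hs1 : 1 ≤ s) (hs2 : s ≤ n - 1) :
    IsLeast {b : ℕ | 0 < b ∧
        ∃ δ : ℕ → ℕ, b * m1 = ∑ i ∈ Finset.Icc 2 n, δ i * m i}
      (p * h + d + h) := by
  constructor
  · refine ⟨by positivity, fun i => (if i = n then p else 0) + (if i = s + 1 then 1 else 0), ?_⟩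
    have h1 : m n = h * m1 + (n - 1) * d := hm n (by omega) le_rfl
    have h2 : m (s + 1) = h * m1 + s * d := by
      have := hm (s + 1) (by omega) (by omega)
      simpa using this
    have hsum : ∑ i ∈ Finset.Icc 2 n, ((if i = n then p else 0) + (if i = s + 1 then 1 else 0)) * m i
        = p * m n + 1 * m (s + 1) := by
      rw [Finset.sum_congr rfl (fun i _ => add_mul _ _ _), Finset.sum_add_distrib]
      have e1 : ∑ i ∈ Finset.Icc 2 n, (if i = n then p else 0) * m i = p * m n := by
        rw [Finset.sum_eq_single n]
        · simp
        · intro i _ hne; simp [hne]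
        · intro hmem; simp [Finset.mem_Icc] at hmem; omega
      have e2 : ∑ i ∈ Finset.Icc 2 n, (if i = s + 1 then 1 else 0) * m i = 1 * m (s + 1) := by
        rw [Finset.sum_eq_single (s + 1)]
        · simp
        · intro i _ hne; simp [hne]
        · intro hmem; simp [Finset.mem_Icc] at hmem; omega
      rw [e1, e2]
    rw [hsum, h1, h2]
    have hnn : p * (n - 1) + s = m1 := hdiv.symm
    nlinarith [hnn]
  · rintro b ⟨hb, δ, heq⟩
    set A := ∑ i ∈ Finset.Icc 2 n, δ i with hA
    set B := ∑ i ∈ Finset.Icc 2 n, δ i * (i - 1) with hB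
    have hsum : ∑ i ∈ Finset.Icc 2 n, δ i * m i = A * (h * m1) + B * d := by
      rw [hA, hB, Finset.sum_mul, Finset.sum_mul, ← Finset.sum_add_distrib]
      apply Finset.sum_congr rfl
      intro i hi
      simp only [Finset.mem_Icc] at hi
      rw [hm i hi.1 hi.2]
      ring
    have key : b * m1 = A * (h * m1) + B * d := by rw [heq, hsum]
    -- A ≤ B
    have hAB : A ≤ B := by
      apply Finset.sum_le_sum
      intro i hi
      simp only [Finset.mem_Icc] at hi
      have : 1 ≤ i - 1 := by omega
      calc δ i = δ i * 1 := by ring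
        _ ≤ δ i * (i - 1) := Nat.mul_le_mul_left _ this
    -- B ≤ A * (n-1)
    have hBA : B ≤ A * (n - 1) := by
      rw [hA, Finset.sum_mul]
      apply Finset.sum_le_sum
      intro i hi
      simp only [Finset.mem_Icc] at hi
      exact Nat.mul_le_mul_left _ (by omega)
    -- m1 ∣ B
    have hdvdB : m1 ∣ B := by
      have h1 : m1 ∣ b * m1 := dvd_mul_left m1 b
      have h2 : m1 ∣ A * (h * m1) := ⟨A * h, by ring⟩
      have h3 : m1 ∣ B * d := by
        have : B * d = b * m1 - A * (h * m1) := by omega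
        rw [this]
        exact Nat.dvd_sub h1 h2
      exact (Nat.Coprime.dvd_of_dvd_mul_right hgcd h3)
    have hBne : B ≠ 0 := by
      intro h0
      have hA0 : A = 0 := by omega
      rw [h0, hA0] at key
      simp at key
      rcases key with h | h <;> omega
    have hBge : m1 ≤ B := Nat.le_of_dvd (by omega) hdvdB
    have hAge : p + 1 ≤ A := by
      by_contra hc
      push_neg at hc
      have : A * (n - 1) ≤ p * (n - 1) := Nat.mul_le_mul_right _ (by omega)
      omega
    -- conclude
    have hfin : (p * h + d + h) * m1 ≤ b * m1 := by
      have h1 : (p + 1) * (h * m1) ≤ A * (h * m1) := Nat.mul_le_mul_right _ hAge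
      have h2 : m1 * d ≤ B * d := Nat.mul_le_mul_right _ hBge
      nlinarith [key]
    exact Nat.le_of_mul_le_mul_right hfin (by omega)
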